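/- arXiv:1811.07424 — 2 statements merged into one kernel-verified Lean document; each statement's English description precedes it below -/
import Mathlib

section
/- In the product-set setup, let ℓ be a non-principal line with positive slope u, and suppose that for some (ω,η) ∈ {0,…,n₁−1}^ℕ × {0,…,n₂−1}^ℕ the upper box dimension γ of (π_{m₁}(F̃_ω) × π_{m₂}(Ẽ_η)) ∩ ℓ is positive. Then there exist t₀ ∈ [0,1), nonnegative integers n ≤ k with u·m₂^k/m₁^n = m₁^{t₀} ∈ (1, m₁), and a line ℓ' of slope m₁^{t₀} such that the upper box dimension of (π_{m₁}(F̃_{σⁿω}) × π_{m₂}(Ẽ_{σᵏη})) ∩ ℓ' is at least γ. -/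
open Set Filter MeasureTheory Metric
open scoped ENNReal NNReal
noncomputable section

/-- Base-`m` expansion `∑_{k≥0} d k / m^(k+1)`. -/
def expandIn (m : ℕ) (d : ℕ → ℕ) : ℝ := ∑' k : ℕ, (d k : ℝ) / (m : ℝ) ^ (k + 1)

/-- The product set `π_m(F̃_ω) = { ∑ x_k m^{-k} : x_k ∈ Γ_{ω_k} }`. -/
def prodSet (m : ℕ) (Γ : ℕ → Set ℕ) (ω : ℕ → ℕ) : Set ℝ :=
  { x | ∃ d : ℕ → ℕ, (∀ k, d k ∈ Γ (ω k)) ∧ x = expandIn m d }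

/-- Covering number of `s` by balls of radius `ε`. -/
def coverNum {X : Type*} [PseudoMetricSpace X] (s : Set X) (ε : ℝ) : ℕ∞ :=
  sInf ((fun t : Finset X => (t.card : ℕ∞)) '' { t | s ⊆ ⋃ x ∈ t, Metric.ball x ε })

/-- Upper box (Minkowski) dimension. -/
def upperBoxDim {X : Type*} [PseudoMetricSpace X] (s : Set X) : ℝ :=
  limsup (fun ε : ℝ => Real.log ((coverNum s ε).toNat : ℝ) / Real.log (1 / ε))
    (nhdsWithin 0 (Set.Ioi 0))

/-- The (non-vertical) line of slope `u` and intercept `b`. -/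
def lineSl (u b : ℝ) : Set (ℝ × ℝ) := { p | p.2 = u * p.1 + b }

section Helpers
open Topology
variable {X : Type*} [PseudoMetricSpace X] {m : ℕ} {d : ℕ → ℕ}

lemma coverNum_le {s : Set X} {ε : ℝ} {t : Finset X} (h : s ⊆ ⋃ x ∈ t, Metric.ball x ε) :
    coverNum s ε ≤ t.card := sInf_le ⟨t, h, rfl⟩

lemma coverNum_attained {s : Set X} {ε : ℝ}
    (h : ∃ t : Finset X, s ⊆ ⋃ x ∈ t, Metric.ball x ε) :
    ∃ t : Finset X, (s ⊆ ⋃ x ∈ t, Metric.ball x ε) ∧ (t.card : ℕ∞) = coverNum s ε := by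
  classical
  set N : Set ℕ := {n : ℕ | ∃ t : Finset X, (s ⊆ ⋃ x ∈ t, Metric.ball x ε) ∧ t.card = n}
  have hN : N.Nonempty := by obtain ⟨t, ht⟩ := h; exact ⟨t.card, t, ht, rfl⟩
  obtain ⟨t₀, ht₀, hcard⟩ := Nat.sInf_mem hN
  refine ⟨t₀, ht₀, le_antisymm ?_ (coverNum_le ht₀)⟩
  refine le_sInf ?_
  rintro b ⟨t', ht', rfl⟩
  simp only []; exact_mod_cast hcard ▸ Nat.sInf_le (⟨t', ht', rfl⟩ : t'.card ∈ N)

lemma one_le_coverNum {s : Set X} {ε : ℝ} (hs : s.Nonempty) : 1 ≤ coverNum s ε := by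
  refine le_sInf ?_
  rintro b ⟨t, ht, rfl⟩
  obtain ⟨x, hx⟩ := hs
  have := ht hx
  simp only [Set.mem_iUnion] at this
  obtain ⟨y, hy, -⟩ := this
  have : 0 < t.card := Finset.card_pos.2 ⟨y, hy⟩
  simp only []; exact_mod_cast this

lemma coverNum_empty (ε : ℝ) : coverNum (∅ : Set X) ε = 0 := by
  have : coverNum (∅ : Set X) ε ≤ (∅ : Finset X).card := coverNum_le (by simp)
  simpa using this

lemma coverNum_union_images_le {ι : Type*} [DecidableEq X] {s : Set X} {ε : ℝ}
    (t : Finset ι) (F : ι → X → X) (S : ι → Set X)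
    (hF : ∀ i ∈ t, LipschitzWith 1 (F i))
    (hcov : s ⊆ ⋃ i ∈ t, F i '' S i)
    (hex : ∀ i ∈ t, ∃ u : Finset X, S i ⊆ ⋃ x ∈ u, Metric.ball x ε) :
    coverNum s ε ≤ ∑ i ∈ t, coverNum (S i) ε := by
  classical
  choose! u hu hucard using fun i (hi : i ∈ t) => coverNum_attained (hex i hi)
  set T : Finset X := t.biUnion (fun i => (u i).image (F i)) with hT
  have hTcov : s ⊆ ⋃ x ∈ T, Metric.ball x ε := by
    intro x hx
    obtain ⟨i, hi, w, hw, rfl⟩ := by simpa using hcov hx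
    obtain ⟨y, hy, hwy⟩ := by simpa using hu i hi hw
    have hdist : dist (F i w) (F i y) < ε := by
      calc dist (F i w) (F i y) ≤ 1 * dist w y := (hF i hi).dist_le_mul w y
      _ < ε := by simpa using hwy
    simp only [Set.mem_iUnion, Metric.mem_ball]
    exact ⟨F i y, by simp [hT]; exact ⟨i, hi, y, hy, rfl⟩, hdist⟩
  calc coverNum s ε ≤ (T.card : ℕ∞) := coverNum_le hTcov
    _ ≤ ∑ i ∈ t, (((u i).image (F i)).card : ℕ∞) := by
        exact_mod_cast Nat.cast_le.2 (Finset.card_biUnion_le)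
    _ ≤ ∑ i ∈ t, coverNum (S i) ε := by
        refine Finset.sum_le_sum fun i hi => ?_
        rw [← hucard i hi]
        exact_mod_cast Finset.card_image_le

lemma grid_cover {s : Set (ℝ × ℝ)} (hs : s ⊆ Set.Icc (0:ℝ) 1 ×ˢ Set.Icc (0:ℝ) 1)
    {ε : ℝ} (hε : 0 < ε) :
    ∃ T : Finset (ℝ × ℝ), (s ⊆ ⋃ x ∈ T, Metric.ball x ε) ∧
      T.card ≤ (⌈1/ε⌉₊ + 1)^2 := by
  classical
  set K := ⌈1/ε⌉₊
  set T : Finset (ℝ × ℝ) := (Finset.range (K+1) ×ˢ Finset.range (K+1)).image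
    (fun p => ((p.1 : ℝ) * ε, (p.2 : ℝ) * ε)) with hT
  have key : ∀ x : ℝ, x ∈ Set.Icc (0:ℝ) 1 → ∃ i : ℕ, i < K + 1 ∧ dist x ((i:ℝ)*ε) < ε := by
    intro x hx
    refine ⟨⌊x/ε⌋₊, ?_, ?_⟩
    · have h1 : x / ε ≤ 1 / ε := by gcongr; exacts [hx.2]
      have : ⌊x/ε⌋₊ ≤ K := le_trans (Nat.floor_le_floor h1) (Nat.floor_le_ceil _)
      omega
    · have h0 : 0 ≤ x / ε := div_nonneg hx.1 hε.le
      have h2 : (⌊x/ε⌋₊ : ℝ) * ε ≤ x := by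
        have := Nat.floor_le h0
        calc (⌊x/ε⌋₊ : ℝ) * ε ≤ (x/ε) * ε := by gcongr
        _ = x := by field_simp
      have h3 : x < ((⌊x/ε⌋₊ : ℝ) + 1) * ε := by
        have := Nat.lt_floor_add_one (x/ε)
        calc x = (x/ε) * ε := by field_simp
        _ < ((⌊x/ε⌋₊ : ℝ) + 1) * ε := by gcongr
      rw [Real.dist_eq, abs_sub_lt_iff]
      constructor <;> nlinarith
  refine ⟨T, ?_, ?_⟩
  · rintro ⟨x, y⟩ hxy
    have hx := (hs hxy).1
    have hy := (hs hxy).2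
    obtain ⟨i, hi, hdi⟩ := key x hx
    obtain ⟨j, hj, hdj⟩ := key y hy
    simp only [Set.mem_iUnion, Metric.mem_ball]
    refine ⟨((i:ℝ)*ε, (j:ℝ)*ε), ?_, ?_⟩
    · simp only [hT, Finset.mem_image, Finset.mem_product, Finset.mem_range]
      exact ⟨(i,j), ⟨hi, hj⟩, rfl⟩
    · rw [Prod.dist_eq]; exact max_lt hdi hdj
  · calc T.card ≤ ((Finset.range (K+1)) ×ˢ (Finset.range (K+1))).card := Finset.card_image_le
    _ = (K+1)^2 := by simp [Finset.card_product, sq]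

lemma coverNum_grid {s : Set (ℝ × ℝ)} (hs : s ⊆ Set.Icc (0:ℝ) 1 ×ˢ Set.Icc (0:ℝ) 1)
    {ε : ℝ} (hε : 0 < ε) : coverNum s ε ≤ ((⌈1/ε⌉₊ + 1)^2 : ℕ) := by
  obtain ⟨T, hcov, hcard⟩ := grid_cover hs hε
  exact (coverNum_le hcov).trans (by exact_mod_cast hcard)

def boxFn {X : Type*} [PseudoMetricSpace X] (s : Set X) (ε : ℝ) : ℝ :=
  Real.log ((coverNum s ε).toNat : ℝ) / Real.log (1 / ε)

lemma upperBoxDim_eq {X : Type*} [PseudoMetricSpace X] (s : Set X) :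
    upperBoxDim s = limsup (boxFn s) (nhdsWithin 0 (Set.Ioi 0)) := rfl

lemma log_oneDiv_pos {ε : ℝ} (h0 : 0 < ε) (h1 : ε < 1) : 0 < Real.log (1/ε) :=
  Real.log_pos (by rw [lt_div_iff₀ h0]; linarith)

lemma grid_real_bound {ε : ℝ} (h0 : 0 < ε) (h1 : ε ≤ 1) :
    (((⌈1/ε⌉₊ + 1)^2 : ℕ) : ℝ) ≤ (3/ε)^2 := by
  have h2 : (⌈1/ε⌉₊ : ℝ) < 1/ε + 1 := Nat.ceil_lt_add_one (by positivity)
  have h3 : (2:ℝ) ≤ 2/ε := by rw [le_div_iff₀ h0]; linarith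
  have : (((⌈1/ε⌉₊ + 1)^2 : ℕ) : ℝ) = ((⌈1/ε⌉₊ : ℝ) + 1)^2 := by push_cast; ring
  rw [this]
  have h4 : (⌈1/ε⌉₊ : ℝ) + 1 ≤ 3/ε := by
    have : (3:ℝ)/ε = 1/ε + 2/ε := by ring
    linarith
  have h5 : (0:ℝ) ≤ (⌈1/ε⌉₊ : ℝ) + 1 := by positivity
  exact pow_le_pow_left₀ h5 h4 2

lemma boxFn_le_three {s : Set (ℝ × ℝ)} (hsub : s ⊆ Set.Icc (0:ℝ) 1 ×ˢ Set.Icc (0:ℝ) 1)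
    {ε : ℝ} (h0 : 0 < ε) (h1 : ε ≤ 1/9) : boxFn s ε ≤ 3 := by
  have hε1 : ε < 1 := by linarith
  have hlog : 0 < Real.log (1/ε) := log_oneDiv_pos h0 hε1
  have hN : (((coverNum s ε).toNat : ℕ) : ℝ) ≤ (3/ε)^2 := by
    have := coverNum_grid hsub h0
    have h' : (coverNum s ε).toNat ≤ (⌈1/ε⌉₊ + 1)^2 := ENat.toNat_le_of_le_coe this
    calc (((coverNum s ε).toNat : ℕ) : ℝ) ≤ (((⌈1/ε⌉₊ + 1)^2 : ℕ) : ℝ) := by exact_mod_cast h'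
    _ ≤ (3/ε)^2 := grid_real_bound h0 hε1.le
  have hlog9 : Real.log 9 ≤ Real.log (1/ε) := by
    apply Real.log_le_log (by norm_num)
    rw [le_div_iff₀ h0]; linarith
  have hlog3 : Real.log ((3/ε)^2) = 2 * Real.log 3 + 2 * Real.log (1/ε) := by
    rw [Real.log_pow]
    have : (3:ℝ)/ε = 3 * (1/ε) := by ring
    rw [this, Real.log_mul (by norm_num) (by positivity)]
    push_cast; ring
  have h9 : Real.log 9 = 2 * Real.log 3 := by
    have : (9:ℝ) = 3^2 := by norm_num
    rw [this, Real.log_pow]; push_cast; ring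
  have hlogN : Real.log ((coverNum s ε).toNat : ℝ) ≤ 3 * Real.log (1/ε) := by
    rcases Nat.eq_zero_or_pos (coverNum s ε).toNat with h | h
    · rw [h]
      have := hlog
      rw [one_div, Real.log_inv] at this
      simp
      linarith
    · have h1' : (1:ℝ) ≤ ((coverNum s ε).toNat : ℝ) := by exact_mod_cast h
      calc Real.log ((coverNum s ε).toNat : ℝ) ≤ Real.log ((3/ε)^2) :=
            Real.log_le_log (by linarith) hN
      _ = 2 * Real.log 3 + 2 * Real.log (1/ε) := hlog3
      _ ≤ 3 * Real.log (1/ε) := by linarith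
  rw [boxFn, div_le_iff₀ hlog]
  linarith

lemma upperBoxDim_le_of_cover {ι : Type*} {s : Set (ℝ × ℝ)} (hs : s.Nonempty)
    (t : Finset ι) (F : ι → ℝ × ℝ → ℝ × ℝ) (S : ι → Set (ℝ × ℝ))
    (hF : ∀ i ∈ t, LipschitzWith 1 (F i))
    (hS : ∀ i ∈ t, S i ⊆ Set.Icc (0:ℝ) 1 ×ˢ Set.Icc (0:ℝ) 1)
    (hcov : s ⊆ ⋃ i ∈ t, F i '' S i)
    {c : ℝ} (hc0 : 0 ≤ c) (hdim : ∀ i ∈ t, upperBoxDim (S i) ≤ c) :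
    upperBoxDim s ≤ c := by
  classical
  -- t is nonempty
  obtain ⟨x₀, hx₀⟩ := hs
  have hx₀' := hcov hx₀
  simp only [Set.mem_iUnion] at hx₀'
  obtain ⟨i₁, hi₁, -⟩ := hx₀'
  have ht : t.Nonempty := ⟨i₁, hi₁⟩
  have htc : (1:ℝ) ≤ t.card := by exact_mod_cast Finset.card_pos.2 ht
  -- the main eventual estimate, for each δ > 0
  suffices H : ∀ δ : ℝ, 0 < δ → upperBoxDim s ≤ c + δ by
    by_contra hlt
    push_neg at hlt
    have := H ((upperBoxDim s - c)/2) (by linarith)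
    linarith
  intro δ hδ
  have evIoc : ∀ᶠ ε in 𝓝[>] (0:ℝ), ε ∈ Set.Ioc (0:ℝ) (1/9) :=
    eventually_mem_set.2 (Ioc_mem_nhdsGT_of_mem ⟨le_refl 0, by norm_num⟩)
  -- each boxFn (S i) is eventually < c + δ/2
  have ev2 : ∀ᶠ ε in 𝓝[>] (0:ℝ), ∀ i ∈ t, boxFn (S i) ε < c + δ/2 := by
    rw [eventually_all_finset]
    intro i hi
    have hbdd : IsBoundedUnder (· ≤ ·) (𝓝[>] (0:ℝ)) (boxFn (S i)) :=
      ⟨3, eventually_map.2 (evIoc.mono fun ε hε => boxFn_le_three (hS i hi) hε.1 hε.2)⟩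
    have : limsup (boxFn (S i)) (𝓝[>] (0:ℝ)) < c + δ/2 :=
      lt_of_le_of_lt ((upperBoxDim_eq (S i)) ▸ hdim i hi) (by linarith)
    exact eventually_lt_of_limsup_lt this hbdd
  -- log t.card / log (1/ε) is eventually < δ/2
  have ev3 : ∀ᶠ ε in 𝓝[>] (0:ℝ), Real.log t.card / Real.log (1/ε) < δ/2 := by
    have htend : Tendsto (fun ε : ℝ => Real.log t.card / Real.log (1/ε)) (𝓝[>] (0:ℝ)) (𝓝 0) := by
      have h1 : Tendsto (fun ε : ℝ => Real.log (1/ε)) (𝓝[>] (0:ℝ)) atTop := by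
        have : Tendsto (fun ε : ℝ => -Real.log ε) (𝓝[>] (0:ℝ)) atTop :=
          tendsto_neg_atBot_atTop.comp Real.tendsto_log_nhdsGT_zero
        refine this.congr fun ε => ?_
        rw [one_div, Real.log_inv]
      exact Tendsto.div_atTop tendsto_const_nhds h1
    exact htend.eventually_lt_const (by linarith)
  -- combine
  have evMain : ∀ᶠ ε in 𝓝[>] (0:ℝ), 0 ≤ boxFn s ε ∧ boxFn s ε ≤ c + δ := by
    filter_upwards [evIoc, ev2, ev3] with ε hε h2 h3
    obtain ⟨h0, h19⟩ := hε
    have hε1 : ε < 1 := by linarith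
    have hlog : 0 < Real.log (1/ε) := log_oneDiv_pos h0 hε1
    -- covering numbers
    have hex : ∀ i ∈ t, ∃ u : Finset (ℝ × ℝ), S i ⊆ ⋃ x ∈ u, Metric.ball x ε :=
      fun i hi => (grid_cover (hS i hi) h0).imp fun u hu => hu.1
    have hsum := coverNum_union_images_le t F S hF hcov hex
    have hfin : ∀ i ∈ t, coverNum (S i) ε ≠ ⊤ := by
      intro i hi
      exact ne_top_of_le_ne_top (ENat.coe_ne_top _) (coverNum_grid (hS i hi) h0)
    obtain ⟨i₀, hi₀, hmax⟩ := Finset.exists_max_image t (fun i => (coverNum (S i) ε).toNat) ht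
    have hsum2 : coverNum s ε ≤ (t.card * (coverNum (S i₀) ε).toNat : ℕ) := by
      refine hsum.trans ?_
      have : ∀ i ∈ t, coverNum (S i) ε ≤ ((coverNum (S i₀) ε).toNat : ℕ∞) := by
        intro i hi
        rw [← ENat.coe_toNat (hfin i hi)]
        exact_mod_cast hmax i hi
      calc ∑ i ∈ t, coverNum (S i) ε ≤ ∑ i ∈ t, ((coverNum (S i₀) ε).toNat : ℕ∞) :=
            Finset.sum_le_sum this
      _ = (t.card * (coverNum (S i₀) ε).toNat : ℕ) := by
            rw [Finset.sum_const, nsmul_eq_mul]; push_cast; ring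
    set Ns : ℕ := (coverNum s ε).toNat
    set Ni : ℕ := (coverNum (S i₀) ε).toNat
    have hNs_le : Ns ≤ t.card * Ni := ENat.toNat_le_of_le_coe hsum2
    have hNs1 : 1 ≤ Ns := by
      have h1 := one_le_coverNum (s := s) (ε := ε) ⟨x₀, hx₀⟩
      have : (1 : ℕ∞) ≤ ((t.card * Ni : ℕ) : ℕ∞) := h1.trans hsum2
      have hfin' : coverNum s ε ≠ ⊤ := ne_top_of_le_ne_top (ENat.coe_ne_top _) hsum2
      rw [← ENat.coe_toNat hfin'] at h1
      exact_mod_cast h1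
    have hNi1 : 1 ≤ Ni := by
      by_contra h
      push_neg at h
      interval_cases Ni
      omega
    -- now the real-log computation
    have hlogNs : Real.log Ns ≤ Real.log t.card + Real.log Ni := by
      have hcast : ((t.card * Ni : ℕ) : ℝ) = (t.card : ℝ) * (Ni : ℝ) := by push_cast; ring
      have hc1 : ((t.card : ℕ) : ℝ) ≠ 0 := by
        have := Finset.card_pos.2 ht
        positivity
      have hc2 : ((Ni : ℕ) : ℝ) ≠ 0 := by
        have : (0:ℕ) < Ni := hNi1
        positivity
      calc Real.log Ns ≤ Real.log ((t.card : ℝ) * (Ni : ℝ)) := by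
            rw [← hcast]
            apply Real.log_le_log (by exact_mod_cast hNs1)
            exact_mod_cast hNs_le
      _ = Real.log t.card + Real.log Ni := Real.log_mul hc1 hc2
    constructor
    · apply div_nonneg _ hlog.le
      exact Real.log_nonneg (by exact_mod_cast hNs1)
    · have hbfn : boxFn s ε = Real.log Ns / Real.log (1/ε) := rfl
      rw [hbfn, div_le_iff₀ hlog]
      have h2' := h2 i₀ hi₀
      have hbfn2 : boxFn (S i₀) ε = Real.log Ni / Real.log (1/ε) := rfl
      rw [hbfn2, div_lt_iff₀ hlog] at h2'
      rw [div_lt_iff₀ hlog] at h3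
      linarith
  -- conclude via limsup
  rw [upperBoxDim_eq]
  refine limsup_le_of_le ?_ (evMain.mono fun ε h => h.2)
  exact isCoboundedUnder_le_of_eventually_le _ (x := 0) (evMain.mono fun ε h => h.1)

lemma expand_summable (hm : 2 ≤ m) (hd : ∀ j, d j < m) :
    Summable (fun k : ℕ => (d k : ℝ) / (m : ℝ) ^ (k + 1)) := by
  have hm1 : (1:ℝ) < m := by exact_mod_cast hm.trans_lt' one_lt_two
  have hgeo : Summable (fun k : ℕ => (m : ℝ) * ((1:ℝ)/m) ^ (k+1)) := by
    apply Summable.mul_left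
    exact (summable_geometric_of_lt_one (by positivity) (by rw [div_lt_iff₀] <;> linarith)).comp_injective
      (add_left_injective 1)
  refine Summable.of_nonneg_of_le (fun k => by positivity) (fun k => ?_) hgeo
  have h1 : (d k : ℝ) ≤ m := by exact_mod_cast (hd k).le
  have h2 : (0:ℝ) < (m:ℝ)^(k+1) := by positivity
  rw [div_le_iff₀ h2]
  calc (d k : ℝ) ≤ m := h1
  _ = (m : ℝ) * ((1/m)^(k+1) * (m:ℝ)^(k+1)) := by
      rw [div_pow, one_pow, div_mul_cancel₀]
      · simp
      · positivity
  _ = (m : ℝ) * (1/m)^(k+1) * (m:ℝ)^(k+1) := by ring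

lemma expandIn_nonneg (hm : 2 ≤ m) (hd : ∀ j, d j < m) : 0 ≤ expandIn m d :=
  tsum_nonneg (fun k => by positivity)

lemma expandIn_le_one (hm : 2 ≤ m) (hd : ∀ j, d j < m) : expandIn m d ≤ 1 := by
  have hm0 : (0:ℝ) < m := by positivity
  have hm1 : (1:ℝ) < m := by exact_mod_cast hm.trans_lt' one_lt_two
  have hsum2 : Summable (fun k : ℕ => ((m:ℝ) - 1) * ((1:ℝ)/m) ^ (k+1)) := by
    apply Summable.mul_left
    exact (summable_geometric_of_lt_one (by positivity) (by rw [div_lt_iff₀] <;> linarith)).comp_injective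
      (add_left_injective 1)
  have hle : ∀ k : ℕ, (d k : ℝ) / (m : ℝ) ^ (k + 1) ≤ ((m:ℝ) - 1) * ((1:ℝ)/m) ^ (k+1) := by
    intro k
    have h1 : (d k : ℝ) ≤ (m:ℝ) - 1 := by
      have : d k + 1 ≤ m := hd k
      have : ((d k : ℕ) : ℝ) + 1 ≤ m := by exact_mod_cast this
      linarith
    have h2 : (0:ℝ) < (m:ℝ)^(k+1) := by positivity
    rw [div_pow, one_pow, div_le_iff₀ h2]
    have : (↑m - 1) * (1 / (↑m:ℝ) ^ (k+1)) * ↑m ^ (k + 1) = ↑m - 1 := by field_simp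
    rw [this]; exact h1
  calc expandIn m d ≤ ∑' k : ℕ, ((m:ℝ) - 1) * ((1:ℝ)/m) ^ (k+1) :=
        Summable.tsum_le_tsum hle (expand_summable hm hd) hsum2
  _ = ((m:ℝ) - 1) * ∑' k : ℕ, ((1:ℝ)/m) ^ (k+1) := tsum_mul_left
  _ = ((m:ℝ) - 1) * ((1/m) * (1/(1 - 1/m))) := by
      congr 1
      have : ∀ k : ℕ, ((1:ℝ)/m)^(k+1) = (1/m) * (1/m)^k := fun k => by ring
      simp_rw [this]
      rw [tsum_mul_left, tsum_geometric_of_lt_one (by positivity) (by rw [div_lt_iff₀] <;> linarith)]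
      rw [one_div (1 - 1/(m:ℝ))]
  _ = 1 := by
      have : (m:ℝ) - 1 ≠ 0 := by linarith
      field_simp

lemma digitSum_le (hm : 2 ≤ m) (n : ℕ) (hd : ∀ j, d j < m) :
    (∑ j ∈ Finset.range n, d j * m^(n-1-j)) ≤ n * m^n := by
  calc (∑ j ∈ Finset.range n, d j * m^(n-1-j)) ≤ ∑ j ∈ Finset.range n, m^n := by
        refine Finset.sum_le_sum fun j hj => ?_
        have hj' : j < n := Finset.mem_range.1 hj
        calc d j * m^(n-1-j) ≤ m * m^(n-1-j) := Nat.mul_le_mul_right _ (hd j).le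
        _ = m^(1+(n-1-j)) := by rw [pow_add, pow_one]
        _ ≤ m^n := Nat.pow_le_pow_right (by omega) (by omega)
  _ = n * m^n := by simp [Finset.sum_const, Finset.card_range]

lemma expandIn_split (hm : 2 ≤ m) (hd : ∀ j, d j < m) (n : ℕ) :
    expandIn m d =
      (((∑ j ∈ Finset.range n, d j * m^(n-1-j) : ℕ) : ℝ) + expandIn m (fun i => d (i+n)))
        / (m : ℝ)^n := by
  have hm0 : (0:ℝ) < m := by positivity
  have hsum := expand_summable hm hd
  have hsplit := Summable.sum_add_tsum_nat_add n hsum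
  have hhead : ∑ j ∈ Finset.range n, (d j : ℝ) / (m:ℝ)^(j+1)
      = ((∑ j ∈ Finset.range n, d j * m^(n-1-j) : ℕ) : ℝ) / (m:ℝ)^n := by
    push_cast
    rw [Finset.sum_div]
    refine Finset.sum_congr rfl fun j hj => ?_
    have hj' : j < n := Finset.mem_range.1 hj
    rw [mul_div_assoc]
    have hpow : (m:ℝ)^n = (m:ℝ)^(n-1-j) * (m:ℝ)^(j+1) := by rw [← pow_add]; congr 1; omega
    rw [hpow]
    field_simp
  have htail : ∑' i : ℕ, (d (i+n) : ℝ) / (m:ℝ)^((i+n)+1)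
      = expandIn m (fun i => d (i+n)) / (m:ℝ)^n := by
    have : ∀ i : ℕ, (d (i+n) : ℝ) / (m:ℝ)^((i+n)+1)
        = (1/(m:ℝ)^n) * ((d (i+n) : ℝ) / (m:ℝ)^(i+1)) := by
      intro i
      rw [div_mul_div_comm, one_mul]
      congr 1
      rw [← pow_add]
      congr 1
      omega
    simp_rw [this]
    rw [tsum_mul_left, expandIn]
    ring
  calc expandIn m d = ∑ j ∈ Finset.range n, (d j : ℝ) / (m:ℝ)^(j+1)
        + ∑' i : ℕ, (d (i+n) : ℝ) / (m:ℝ)^((i+n)+1) := hsplit.symm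
  _ = (((∑ j ∈ Finset.range n, d j * m^(n-1-j) : ℕ) : ℝ) + expandIn m (fun i => d (i+n)))
        / (m : ℝ)^n := by rw [hhead, htail, add_div]

lemma prodSet_decomp {Γ : ℕ → Set ℕ} {ω : ℕ → ℕ} (hm : 2 ≤ m)
    (hdig : ∀ k j, j ∈ Γ (ω k) → j < m) (n : ℕ) {x : ℝ} (hx : x ∈ prodSet m Γ ω) :
    ∃ a : ℕ, a ≤ n * m^n ∧ ∃ y ∈ prodSet m Γ (fun i => ω (i+n)),
      x = ((a:ℝ) + y) / (m:ℝ)^n := by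
  obtain ⟨d, hd, rfl⟩ := hx
  have hd' : ∀ j, d j < m := fun j => hdig j (d j) (hd j)
  refine ⟨∑ j ∈ Finset.range n, d j * m^(n-1-j), digitSum_le hm n hd',
    expandIn m (fun i => d (i+n)), ⟨fun i => d (i+n), fun k => hd (k+n), rfl⟩,
    expandIn_split hm hd' n⟩

lemma prodSet_subset_Icc {Γ : ℕ → Set ℕ} {ω : ℕ → ℕ} (hm : 2 ≤ m)
    (hdig : ∀ k j, j ∈ Γ (ω k) → j < m) :
    prodSet m Γ ω ⊆ Set.Icc (0:ℝ) 1 := by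
  rintro x ⟨d, hd, rfl⟩
  have hd' : ∀ j, d j < m := fun j => hdig j (d j) (hd j)
  exact ⟨expandIn_nonneg hm hd', expandIn_le_one hm hd'⟩

lemma exists_nk {θ c : ℝ} (hirr : Irrational θ) (hθ0 : 0 < θ) (hθ1 : θ < 1) :
    ∃ n k : ℕ, n ≤ k ∧ 0 < (k:ℝ)*θ + c - n ∧ (k:ℝ)*θ + c - n < 1 := by
  set K : ℕ := ⌈|c|/θ⌉₊ + ⌈|c|/(1-θ)⌉₊ + 1 with hK
  have hKθ : |c| ≤ (K:ℝ) * θ := by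
    have h1 : |c|/θ ≤ (⌈|c|/θ⌉₊ : ℝ) := Nat.le_ceil _
    have h2 : (⌈|c|/θ⌉₊ : ℝ) ≤ K := by exact_mod_cast Nat.le_add_right _ _ |>.trans (Nat.le_succ _)
    calc |c| = (|c|/θ) * θ := (div_mul_cancel₀ _ (ne_of_gt hθ0)).symm
    _ ≤ (K:ℝ) * θ := mul_le_mul_of_nonneg_right (h1.trans h2) hθ0.le
  have hK1θ : |c| ≤ (K:ℝ) * (1-θ) := by
    have h1 : |c|/(1-θ) ≤ (⌈|c|/(1-θ)⌉₊ : ℝ) := Nat.le_ceil _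
    have h2 : (⌈|c|/(1-θ)⌉₊ : ℝ) ≤ K := by
      have : ⌈|c|/(1-θ)⌉₊ ≤ K := by omega
      exact_mod_cast this
    calc |c| = (|c|/(1-θ)) * (1-θ) := (div_mul_cancel₀ _ (by linarith : (1:ℝ)-θ ≠ 0)).symm
    _ ≤ (K:ℝ) * (1-θ) := mul_le_mul_of_nonneg_right (h1.trans h2) (by linarith)
  clear_value K
  have habs1 : -(|c|) ≤ c := neg_abs_le c
  have habs2 : c ≤ |c| := le_abs_self c
  -- both K, K+1 satisfy range conditions; pick one with nonzero fractional part
  have hgood : ∀ k : ℕ, K ≤ k → (0 ≤ (k:ℝ)*θ + c ∧ (k:ℝ)*θ + c ≤ k) := by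
    intro k hk
    have hk' : (K:ℝ) ≤ k := by exact_mod_cast hk
    constructor
    · nlinarith
    · nlinarith
  have hkey : ∃ k : ℕ, K ≤ k ∧ Int.fract ((k:ℝ)*θ + c) ≠ 0 := by
    by_cases h1 : Int.fract ((K:ℝ)*θ + c) ≠ 0
    · exact ⟨K, le_refl _, h1⟩
    · push_neg at h1
      refine ⟨K+1, Nat.le_succ _, fun h2 => ?_⟩
      have e1 : (K:ℝ)*θ + c = (⌊(K:ℝ)*θ + c⌋ : ℝ) := by
        have := h1
        rw [Int.fract] at this
        linarith [sub_eq_zero.1 this]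
      have e2 : ((K+1:ℕ):ℝ)*θ + c = (⌊((K+1:ℕ):ℝ)*θ + c⌋ : ℝ) := by
        rw [Int.fract] at h2
        linarith [sub_eq_zero.1 h2]
      have ecast : ((K+1:ℕ):ℝ) = (K:ℝ)+1 := by push_cast; ring
      rw [ecast] at e2
      have eθ : θ = ((⌊((K:ℝ)+1)*θ + c⌋ - ⌊(K:ℝ)*θ + c⌋ : ℤ) : ℝ) := by
        push_cast
        linarith
      exact hirr.ne_int _ eθ
  obtain ⟨k, hk, hfrac⟩ := hkey
  obtain ⟨hge0, hlek⟩ := hgood k hk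
  set x : ℝ := (k:ℝ)*θ + c with hx
  have hfl : (0:ℤ) ≤ ⌊x⌋ := Int.floor_nonneg.2 hge0
  refine ⟨⌊x⌋.toNat, k, ?_, ?_, ?_⟩
  · have h1 : ((⌊x⌋.toNat : ℤ) : ℝ) ≤ (k:ℝ) := by
      rw [Int.toNat_of_nonneg hfl]
      exact (Int.floor_le x).trans hlek
    exact_mod_cast h1
  · have hcast : ((⌊x⌋.toNat : ℕ) : ℝ) = ((⌊x⌋ : ℤ) : ℝ) := by
      exact_mod_cast Int.toNat_of_nonneg hfl
    rw [hcast]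
    have : 0 < Int.fract x := Int.fract_pos.2 (fun h => hfrac (by rw [Int.fract]; exact sub_eq_zero.2 h))
    rw [Int.fract] at this
    linarith
  · have hcast : ((⌊x⌋.toNat : ℕ) : ℝ) = ((⌊x⌋ : ℤ) : ℝ) := by
      exact_mod_cast Int.toNat_of_nonneg hfl
    rw [hcast]
    have := Int.fract_lt_one x
    rw [Int.fract] at this
    linarith

end Helpers

lemma upperBoxDim_empty {Y : Type*} [PseudoMetricSpace Y] : upperBoxDim (∅ : Set Y) = 0 := by
  have h : (fun ε : ℝ => Real.log (((coverNum (∅ : Set Y) ε).toNat : ℕ) : ℝ) / Real.log (1/ε))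
      = fun _ => (0:ℝ) := by
    funext ε
    rw [coverNum_empty]
    simp
  rw [upperBoxDim, h, limsup_const]


/-- Reduction of a positive-dimensional slice of a product set to a slice
of slope `m₁^{t₀} ∈ (1, m₁)` of a shifted product set, of at least the same dimension. -/
theorem stmt18
    (m₁ m₂ n₁ n₂ : ℕ) (hm₂ : 2 ≤ m₂) (hm : m₂ < m₁) (hn₁ : 2 ≤ n₁) (hn₂ : 2 ≤ n₂)
    (hirr : Irrational (Real.log m₂ / Real.log m₁))
    (Γ Λ : ℕ → Set ℕ)
    (hΓ : ∀ i < n₁, (Γ i).Nonempty ∧ Γ i ⊆ Set.Iio m₁)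
    (hΛ : ∀ j < n₂, (Λ j).Nonempty ∧ Λ j ⊆ Set.Iio m₂)
    (ω η : ℕ → ℕ) (hω : ∀ k, ω k < n₁) (hη : ∀ k, η k < n₂)
    (u b : ℝ) (hu : 0 < u)
    (γ : ℝ) (hγ : γ = upperBoxDim ((prodSet m₁ Γ ω ×ˢ prodSet m₂ Λ η) ∩ lineSl u b))
    (hγpos : 0 < γ) :
    ∃ (t₀ : ℝ) (n k : ℕ) (b' : ℝ),
      t₀ ∈ Set.Ico (0 : ℝ) 1 ∧ n ≤ k ∧
      u * (m₂ : ℝ) ^ k / (m₁ : ℝ) ^ n = (m₁ : ℝ) ^ t₀ ∧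
      (1 : ℝ) < (m₁ : ℝ) ^ t₀ ∧ (m₁ : ℝ) ^ t₀ < (m₁ : ℝ) ∧
      γ ≤ upperBoxDim
        ((prodSet m₁ Γ (fun i => ω (i + n)) ×ˢ prodSet m₂ Λ (fun i => η (i + k))) ∩
          lineSl ((m₁ : ℝ) ^ t₀) b') := by
  classical
  have hm₁2 : 2 ≤ m₁ := by omega
  have hm₁R : (1:ℝ) < (m₁:ℝ) := by exact_mod_cast by omega
  have hm₂R : (1:ℝ) < (m₂:ℝ) := by exact_mod_cast by omega
  have hlm₁ : 0 < Real.log m₁ := Real.log_pos hm₁R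
  have hlm₂ : 0 < Real.log m₂ := Real.log_pos hm₂R
  set θ : ℝ := Real.log m₂ / Real.log m₁ with hθ
  have hθ0 : 0 < θ := div_pos hlm₂ hlm₁
  have hθ1 : θ < 1 := by
    rw [hθ, div_lt_one hlm₁]
    exact Real.log_lt_log (by positivity) (by exact_mod_cast hm)
  set c : ℝ := Real.log u / Real.log m₁ with hc
  obtain ⟨n, k, hnk, ht0pos, ht0lt⟩ := exists_nk (c := c) hirr hθ0 hθ1
  set t₀ : ℝ := (k:ℝ)*θ + c - n with ht₀
  -- the key slope identity
  have hMn : (0:ℝ) < (m₁:ℝ)^n := by positivity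
  have hMk : (0:ℝ) < (m₂:ℝ)^k := by positivity
  set v : ℝ := u * (m₂:ℝ)^k / (m₁:ℝ)^n with hv
  have hvpos : 0 < v := by positivity
  have hlogv : Real.log v = t₀ * Real.log m₁ := by
    rw [hv, Real.log_div (by positivity) (by positivity), Real.log_mul (ne_of_gt hu) (by positivity),
      Real.log_pow, Real.log_pow, ht₀]
    have e1 : θ * Real.log m₁ = Real.log m₂ := div_mul_cancel₀ _ (ne_of_gt hlm₁)
    have e2 : c * Real.log m₁ = Real.log u := div_mul_cancel₀ _ (ne_of_gt hlm₁)
    nlinarith [e1, e2]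
  have hval : v = (m₁:ℝ) ^ t₀ := by
    rw [Real.rpow_def_of_pos (by positivity : (0:ℝ) < (m₁:ℝ)), mul_comm, ← hlogv,
      Real.exp_log hvpos]
  have hone_lt : (1:ℝ) < (m₁:ℝ) ^ t₀ := by
    rw [show (1:ℝ) = (m₁:ℝ) ^ (0:ℝ) by rw [Real.rpow_zero]]
    exact Real.rpow_lt_rpow_left_iff hm₁R |>.2 ht0pos
  have hlt_m : (m₁:ℝ) ^ t₀ < (m₁:ℝ) := by
    nth_rewrite 2 [show (m₁:ℝ) = (m₁:ℝ) ^ (1:ℝ) by rw [Real.rpow_one]]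
    exact Real.rpow_lt_rpow_left_iff hm₁R |>.2 ht0lt
  -- digit bounds
  have hdig₁ : ∀ j i, i ∈ Γ (ω j) → i < m₁ := fun j i hi => (hΓ (ω j) (hω j)).2 hi
  have hdig₂ : ∀ j i, i ∈ Λ (η j) → i < m₂ := fun j i hi => (hΛ (η j) (hη j)).2 hi
  have hdig₁' : ∀ j i, i ∈ Γ ((fun i => ω (i + n)) j) → i < m₁ :=
    fun j i hi => (hΓ _ (hω _)).2 hi
  have hdig₂' : ∀ j i, i ∈ Λ ((fun i => η (i + k)) j) → i < m₂ :=
    fun j i hi => (hΛ _ (hη _)).2 hi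
  -- the covering family
  set s : Set (ℝ × ℝ) := (prodSet m₁ Γ ω ×ˢ prodSet m₂ Λ η) ∩ lineSl u b with hsdef
  have hsne : s.Nonempty := by
    rcases Set.eq_empty_or_nonempty s with h | h
    · exfalso
      rw [hγ, h, upperBoxDim_empty] at hγpos
      exact lt_irrefl 0 hγpos
    · exact h
  set t : Finset (ℕ × ℕ) := Finset.range (n * m₁^n + 1) ×ˢ Finset.range (k * m₂^k + 1) with htdef
  have htne : t.Nonempty := by
    refine ⟨(0,0), ?_⟩
    simp [htdef]
  set F : ℕ × ℕ → ℝ × ℝ → ℝ × ℝ :=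
    fun p q => ((q.1 + p.1) / (m₁:ℝ)^n, (q.2 + p.2) / (m₂:ℝ)^k) with hFdef
  set S : ℕ × ℕ → Set (ℝ × ℝ) := fun p =>
    (prodSet m₁ Γ (fun i => ω (i + n)) ×ˢ prodSet m₂ Λ (fun i => η (i + k))) ∩
      lineSl v (v * p.1 + (m₂:ℝ)^k * b - p.2) with hSdef
  have hF : ∀ p ∈ t, LipschitzWith 1 (F p) := by
    intro p _
    rw [lipschitzWith_iff_dist_le_mul]
    intro q q'
    have key : ∀ (x y a M : ℝ), 1 ≤ M → dist ((x + a)/M) ((y + a)/M) ≤ dist x y := by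
      intro x y a M hM
      rw [Real.dist_eq, Real.dist_eq, div_sub_div_same]
      have : x + a - (y + a) = x - y := by ring
      rw [this, abs_div, abs_of_pos (by linarith : (0:ℝ) < M)]
      exact div_le_self (abs_nonneg _) hM
    have h1 : dist ((q.1 + p.1)/(m₁:ℝ)^n) ((q'.1 + p.1)/(m₁:ℝ)^n) ≤ dist q q' :=
      (key _ _ _ _ (one_le_pow₀ hm₁R.le)).trans (le_max_left _ _)
    have h2 : dist ((q.2 + p.2)/(m₂:ℝ)^k) ((q'.2 + p.2)/(m₂:ℝ)^k) ≤ dist q q' :=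
      (key _ _ _ _ (one_le_pow₀ hm₂R.le)).trans (le_max_right _ _)
    rw [Prod.dist_eq]
    simp only [NNReal.coe_one, one_mul, hFdef]
    exact max_le h1 h2
  have hS : ∀ p ∈ t, S p ⊆ Set.Icc (0:ℝ) 1 ×ˢ Set.Icc (0:ℝ) 1 := by
    intro p _
    refine Set.inter_subset_left.trans ?_
    exact Set.prod_mono (prodSet_subset_Icc hm₁2 hdig₁') (prodSet_subset_Icc hm₂ hdig₂')
  have hcov : s ⊆ ⋃ p ∈ t, F p '' S p := by
    rintro ⟨X, Y⟩ ⟨⟨hX, hY⟩, hline⟩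
    have hline' : Y = u * X + b := hline
    obtain ⟨a, ha, x, hxmem, hxeq⟩ := prodSet_decomp hm₁2 hdig₁ n hX
    obtain ⟨e, he, y, hymem, hyeq⟩ := prodSet_decomp hm₂ hdig₂ k hY
    dsimp only at hxeq hyeq
    simp only [Set.mem_iUnion]
    refine ⟨(a, e), ?_, (x, y), ⟨⟨hxmem, hymem⟩, ?_⟩, ?_⟩
    · simp only [htdef, Finset.mem_product, Finset.mem_range]
      omega
    · -- line membership
      show y = v * x + (v * (a:ℝ) + (m₂:ℝ)^k * b - (e:ℝ))
      have hy2 : y = (m₂:ℝ)^k * Y - e := by rw [hyeq]; field_simp; ring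
      rw [hy2, hline', hxeq, hv]
      field_simp
      ring
    · -- image point
      show ((x + (a:ℝ)) / (m₁:ℝ)^n, (y + (e:ℝ)) / (m₂:ℝ)^k) = (X, Y)
      rw [hxeq, hyeq, Prod.mk.injEq]
      exact ⟨by ring, by ring⟩
  -- choose the maximizing index
  obtain ⟨p₀, hp₀, hpmax⟩ := Finset.exists_max_image t (fun p => upperBoxDim (S p)) htne
  have hdimle : upperBoxDim s ≤ max 0 (upperBoxDim (S p₀)) := by
    refine upperBoxDim_le_of_cover hsne t F S hF hS hcov (le_max_left _ _) ?_
    intro p hp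
    exact (hpmax p hp).trans (le_max_right _ _)
  have hγle : γ ≤ upperBoxDim (S p₀) := by
    rcases le_max_iff.1 ((le_of_eq hγ).trans hdimle) with h | h
    · linarith
    · exact h
  refine ⟨t₀, n, k, v * (p₀.1:ℝ) + (m₂:ℝ)^k * b - (p₀.2:ℝ), ⟨ht0pos.le, ht0lt⟩, hnk, hval, hone_lt, hlt_m, ?_⟩
  rw [← hval]
  exact hγle
end
end

section
/- Let F be the Bedford–McMullen carpet with exponents (3,2) and digit set Γ = {(0,0),(0,1),(2,0)}, i.e. F = {(∑_{k=1}^∞ x_k 3^{−k}, ∑_{k=1}^∞ y_k 2^{−k}) : (x_k,y_k) ∈ Γ for all k}, and let E be the Bedford–McMullen carpet with exponents (5,3) and digit set Λ = {(i,0) : 0 ≤ i ≤ 4} ∪ {(j,2) : 0 ≤ j ≤ 4} ∪ {(1,1)}, i.e. E = {(∑_{k=1}^∞ a_k 5^{−k}, ∑_{k=1}^∞ b_k 3^{−k}) : (a_k,b_k) ∈ Λ for all k}. Then the anti-diagonal linear map (x,y) ↦ (y,x) maps F into E, i.e. {(y,x) : (x,y) ∈ F} ⊆ E. -/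
open Set Filter
noncomputable section

/-- The Bedford–McMullen carpet with exponents `(m,n)` and digit set `Γ`. -/
def bmCarpet (m n : ℕ) (Γ : Set (ℕ × ℕ)) : Set (ℝ × ℝ) :=
  { p | ∃ d : ℕ → ℕ × ℕ, (∀ k, d k ∈ Γ) ∧
      p.1 = expandIn m (fun k => (d k).1) ∧ p.2 = expandIn n (fun k => (d k).2) }

lemma summable_aux (m : ℕ) (hm : 2 ≤ m) (d : ℕ → ℕ) (C : ℕ) (hd : ∀ k, d k ≤ C) :
    Summable (fun k : ℕ => (d k : ℝ) / (m : ℝ) ^ (k + 1)) := by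
  have hm1 : (1:ℝ) < m := by exact_mod_cast hm.trans_lt' one_lt_two
  have hm0 : (0:ℝ) < m := lt_trans one_pos hm1
  have hr : (0:ℝ) ≤ 1 / m := by positivity
  have hr1 : (1:ℝ)/m < 1 := by rw [div_lt_one hm0]; exact hm1
  have hs : Summable (fun k : ℕ => ((C:ℝ)/m) * ((1:ℝ)/m) ^ k) :=
    (summable_geometric_of_lt_one hr hr1).mul_left _
  refine Summable.of_nonneg_of_le (fun k => by positivity) (fun k => ?_) hs
  have h1 : (d k : ℝ) / (m:ℝ)^(k+1) ≤ (C:ℝ) / (m:ℝ)^(k+1) := by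
    gcongr; exact_mod_cast hd k
  refine h1.trans_eq ?_
  rw [one_div_pow, pow_succ]
  field_simp

lemma tsum_const_digit (b : ℕ) (hb : 2 ≤ b) :
    ∑' k : ℕ, ((b - 1 : ℕ) : ℝ) / (b:ℝ) ^ (k + 1) = 1 := by
  have hb1 : (1:ℝ) < b := by exact_mod_cast hb.trans_lt' one_lt_two
  have hb0 : (0:ℝ) < b := lt_trans one_pos hb1
  have hr : (0:ℝ) ≤ 1 / b := by positivity
  have hr1 : (1:ℝ)/b < 1 := by rw [div_lt_one hb0]; exact hb1
  have hc : ((b - 1 : ℕ) : ℝ) = (b:ℝ) - 1 := by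
    have : 1 ≤ b := hb.trans' one_le_two
    push_cast [Nat.cast_sub this]; ring
  have h1 : ∀ k : ℕ, ((b - 1 : ℕ) : ℝ) / (b:ℝ) ^ (k + 1)
      = (((b:ℝ)-1)/b) * ((1:ℝ)/b) ^ k := by
    intro k
    rw [hc, one_div_pow, pow_succ]
    field_simp
  rw [tsum_congr h1, tsum_mul_left, tsum_geometric_of_lt_one hr hr1]
  have hne : (b:ℝ) - 1 ≠ 0 := by linarith
  field_simp

lemma expand_nonneg (m : ℕ) (d : ℕ → ℕ) : 0 ≤ expandIn m d :=
  tsum_nonneg (fun k => by positivity)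

lemma expand_le_one (m : ℕ) (hm : 2 ≤ m) (d : ℕ → ℕ) (hd : ∀ k, d k ≤ m - 1) :
    expandIn m d ≤ 1 := by
  have h := Summable.tsum_le_tsum (f := fun k : ℕ => (d k : ℝ)/(m:ℝ)^(k+1))
    (g := fun k : ℕ => ((m-1:ℕ):ℝ)/(m:ℝ)^(k+1))
    (fun k => by
      have hm0 : (0:ℝ) < (m:ℝ) := Nat.cast_pos.mpr (by omega)
      have hpow : (0:ℝ) < (m:ℝ)^(k+1) := by positivity
      exact (div_le_div_iff_of_pos_right hpow).mpr (by exact_mod_cast hd k)) (summable_aux m hm d (m-1) hd)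
    (summable_aux m hm _ (m-1) fun _ => le_refl _)
  exact h.trans_eq (tsum_const_digit m hm)

lemma exists_expansion (b : ℕ) (hb : 2 ≤ b) (r : ℝ) (h0 : 0 ≤ r) (h1 : r ≤ 1) :
    ∃ d : ℕ → ℕ, (∀ k, d k ≤ b - 1) ∧ expandIn b d = r := by
  have hb1 : (1:ℝ) < b := by exact_mod_cast hb.trans_lt' one_lt_two
  have hb0 : (0:ℝ) < b := lt_trans one_pos hb1
  have hr1 : (1:ℝ)/b < 1 := by rw [div_lt_one hb0]; exact hb1
  rcases eq_or_lt_of_le h1 with heq | hlt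
  · exact ⟨fun _ => b - 1, fun _ => le_refl _,
      by rw [expandIn, tsum_const_digit b hb, heq]⟩
  · set f : ℕ → ℤ := fun n => ⌊(b:ℝ)^n * r⌋ with hf
    have hf0 : f 0 = 0 := by
      simp only [hf, pow_zero, one_mul]
      rw [Int.floor_eq_zero_iff]
      exact ⟨h0, hlt⟩
    have hfl : ∀ n, ((f n : ℝ)) ≤ (b:ℝ)^n * r := fun n => Int.floor_le _
    have hfu : ∀ n, (b:ℝ)^n * r < f n + 1 := fun n => Int.lt_floor_add_one _
    have hstep_lo : ∀ n, (b:ℤ) * f n ≤ f (n+1) := by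
      intro n
      refine Int.le_floor.mpr ?_
      push_cast
      rw [pow_succ, mul_comm ((b:ℝ)^n) (b:ℝ), mul_assoc]
      have := hfl n
      nlinarith
    have hstep_hi : ∀ n, f (n+1) ≤ (b:ℤ) * f n + ((b:ℤ) - 1) := by
      intro n
      have h2 : ((f (n+1):ℝ)) ≤ (b:ℝ)^(n+1) * r := hfl (n+1)
      have h3 : (b:ℝ)^(n+1) * r < (b:ℝ) * ((f n : ℝ) + 1) := by
        rw [pow_succ, mul_comm ((b:ℝ)^n) (b:ℝ), mul_assoc]
        have := hfu n
        nlinarith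
      have h4 : (f (n+1) : ℝ) < (((b:ℤ) * f n + (b:ℤ) : ℤ) : ℝ) := by push_cast; linarith
      have h5 : f (n+1) < (b:ℤ) * f n + (b:ℤ) := by exact_mod_cast h4
      omega
    set d : ℕ → ℕ := fun k => (f (k+1) - (b:ℤ) * f k).toNat with hdd
    have hd : ∀ k, d k ≤ b - 1 := by
      intro k
      simp only [hdd]
      rw [Int.toNat_le]
      have := hstep_hi k
      omega
    have hdcast : ∀ k, (d k : ℝ) = (f (k+1) : ℝ) - (b:ℝ) * (f k : ℝ) := by
      intro k
      have hnn : 0 ≤ f (k+1) - (b:ℤ) * f k := by have := hstep_lo k; omega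
      have : ((d k : ℤ) : ℝ) = ((f (k+1) - (b:ℤ) * f k : ℤ) : ℝ) := by
        rw [hdd]; norm_cast; exact Int.toNat_of_nonneg hnn
      push_cast at this
      exact_mod_cast this
    have hsum : ∀ n, ∑ k ∈ Finset.range n, (d k : ℝ)/(b:ℝ)^(k+1) = (f n : ℝ)/(b:ℝ)^n := by
      intro n
      induction n with
      | zero => simp [hf0]
      | succ n ih =>
        rw [Finset.sum_range_succ, ih, hdcast n, pow_succ]
        field_simp
        ring
    have hS := summable_aux b hb d (b-1) hd
    have hT : Tendsto (fun n : ℕ => ((f n:ℝ)/(b:ℝ)^n)) atTop (nhds (expandIn b d)) := by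
      have h := hS.hasSum.tendsto_sum_nat
      rw [show (fun n : ℕ => ∑ k ∈ Finset.range n, (d k:ℝ)/(b:ℝ)^(k+1))
        = fun n : ℕ => (f n:ℝ)/(b:ℝ)^n from funext hsum] at h
      exact h
    have hT2 : Tendsto (fun n : ℕ => ((f n:ℝ)/(b:ℝ)^n)) atTop (nhds r) := by
      have hlow : Tendsto (fun n : ℕ => r - (1/(b:ℝ))^n) atTop (nhds r) := by
        have := tendsto_const_nhds (x := r) (f := atTop (α := ℕ)) |>.sub
          (tendsto_pow_atTop_nhds_zero_of_lt_one (by positivity) hr1)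
        simpa using this
      refine tendsto_of_tendsto_of_tendsto_of_le_of_le hlow tendsto_const_nhds ?_ ?_
      · intro n
        have hpow : (0:ℝ) < (b:ℝ)^n := by positivity
        have hfl' : (b:ℝ)^n * r - 1 < ((f n : ℤ) : ℝ) := Int.sub_one_lt_floor _
        have h6 : (1/(b:ℝ))^n * (b:ℝ)^n = 1 := by
          rw [← mul_pow, one_div_mul_cancel hb0.ne', one_pow]
        show r - (1/(b:ℝ))^n ≤ (f n:ℝ)/(b:ℝ)^n
        rw [le_div_iff₀ hpow]
        nlinarith [hfl' , h6]
      · intro n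
        have hpow : (0:ℝ) < (b:ℝ)^n := by positivity
        rw [div_le_iff₀ hpow]
        have := hfl n
        nlinarith
    exact ⟨d, hd, tendsto_nhds_unique hT hT2⟩

/-- The carpet `F` with exponents `(3,2)` and digits
`{(0,0),(0,1),(2,0)}` is mapped into the carpet `E` with exponents `(5,3)` and digits
`{(i,0) : i ≤ 4} ∪ {(j,2) : j ≤ 4} ∪ {(1,1)}` by the flip `(x,y) ↦ (y,x)`. -/
theorem stmt19 :
    (fun p : ℝ × ℝ => (p.2, p.1)) '' bmCarpet 3 2 {(0, 0), (0, 1), (2, 0)} ⊆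
      bmCarpet 5 3
        { q : ℕ × ℕ | (q.2 = 0 ∧ q.1 ≤ 4) ∨ (q.2 = 2 ∧ q.1 ≤ 4) ∨ q = (1, 1) } := by
  rintro p ⟨q, ⟨d, hd, hx, hy⟩, rfl⟩
  have hdig : ∀ k, ((d k).1 = 0 ∧ (d k).2 ≤ 1) ∨ ((d k).1 = 2 ∧ (d k).2 = 0) := by
    intro k
    have h := hd k
    simp only [Set.mem_insert_iff, Set.mem_singleton_iff] at h
    rcases h with h | h | h <;> rw [h] <;> simp
  have h2 : ∀ k, (d k).2 ≤ 2 - 1 := by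
    intro k
    rcases hdig k with ⟨_, h⟩ | ⟨_, h⟩ <;> omega
  have hy0 : 0 ≤ q.2 := hy ▸ expand_nonneg 2 _
  have hy1 : q.2 ≤ 1 := hy ▸ expand_le_one 2 le_rfl _ h2
  obtain ⟨a, ha, hae⟩ := exists_expansion 5 (by norm_num) q.2 hy0 hy1
  refine ⟨fun k => (a k, (d k).1), fun k => ?_, ?_, ?_⟩
  · have hak : a k ≤ 4 := ha k
    rcases hdig k with ⟨h, _⟩ | ⟨h, _⟩
    · exact Or.inl ⟨h, hak⟩
    · exact Or.inr (Or.inl ⟨h, hak⟩)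
  · simpa using hae.symm
  · simpa using hx
end
end
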